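/- Under the same setup as the conditional split-conformal coverage guarantee (fixed measurable l < m < u on ℝ^d, n i.i.d. calibration pairs plus an independent test pair (X,Y) from μ, atomless law of the conformity score c', k = ⌈(1−α)(n+1)⌉ ≤ n, ĉ = c₍ₖ₎), the coverage probability is also bounded above: P( m(X) − ĉ·(m(X) − l(X)) ≤ Y ≤ m(X) + ĉ·(u(X) − m(X)) ) ≤ 1 − α + 1/(n+1). -/

import Mathlib

open MeasureTheory ProbabilityTheory
open scoped ENNReal

/-- The `k`-th smallest entry (zero-indexed `k : Fin n`) of a tuple `v : Fin n → ℝ`. -/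
noncomputable def kthSmallest {n : ℕ} (v : Fin n → ℝ) (k : Fin n) : ℝ :=
  v (Tuple.sort v k)

section Aux

/-- reindexing a filter-count by a permutation. -/
lemma card_filter_perm {ι : Type*} [Fintype ι] [DecidableEq ι] (σ : Equiv.Perm ι)
    (p : ι → Prop) [DecidablePred p] :
    (Finset.univ.filter fun i => p (σ i)).card = (Finset.univ.filter p).card := by
  apply Finset.card_bij (fun i _ => σ i)
  · intro a ha; simp only [Finset.mem_filter, Finset.mem_univ, true_and] at ha ⊢; exact ha
  · intro a _ b _ h; exact σ.injective h
  · intro b hb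
    refine ⟨σ.symm b, ?_, by simp⟩
    simp only [Finset.mem_filter, Finset.mem_univ, true_and] at hb ⊢
    simpa using hb

/-- characterization: `c ≤ kthSmallest w j` iff at most `j` entries of `w` lie below `c`. -/
lemma kth_le_iff {n : ℕ} (w : Fin n → ℝ) (hw : Function.Injective w) (c : ℝ) (j : Fin n) :
    c ≤ kthSmallest w j ↔ (Finset.univ.filter fun i => w i < c).card ≤ (j : ℕ) := by
  classical
  set σ := Tuple.sort w with hσ
  have hg : StrictMono (w ∘ σ) :=
    (Tuple.monotone_sort w).strictMono_of_injective (hw.comp σ.injective)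
  have hcard : (Finset.univ.filter fun i => w i < c).card
      = (Finset.univ.filter fun i => w (σ i) < c).card := (card_filter_perm σ _).symm
  unfold kthSmallest
  rw [hcard]
  constructor
  · intro h
    calc (Finset.univ.filter fun i => w (σ i) < c).card
        ≤ (Finset.Iio j).card := by
          apply Finset.card_le_card
          intro i hi
          simp only [Finset.mem_filter, Finset.mem_univ, true_and] at hi
          simp only [Finset.mem_Iio]
          by_contra hij
          push_neg at hij
          have h2 : w (σ j) ≤ w (σ i) := hg.monotone hij
          have h3 : w (σ j) = (w ∘ σ) j := rfl
          linarith [h, hi, h2]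
      _ = (j : ℕ) := Fin.card_Iio j
  · intro h
    by_contra hlt
    push_neg at hlt
    have hsub : Finset.Iic j ⊆ Finset.univ.filter fun i => w (σ i) < c := by
      intro i hi
      simp only [Finset.mem_Iic] at hi
      simp only [Finset.mem_filter, Finset.mem_univ, true_and]
      exact lt_of_le_of_lt (hg.monotone hi) hlt
    have hc2 := Finset.card_le_card hsub
    rw [Fin.card_Iic] at hc2
    omega

lemma measurable_cnt {N : ℕ} (j : Fin N) :
    Measurable (fun v : Fin N → ℝ => (Finset.univ.filter fun i => v i < v j).card) := by
  classical
  simp_rw [Finset.card_filter]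
  apply Finset.measurable_sum
  intro i _
  exact Measurable.ite (measurableSet_lt (measurable_pi_apply i) (measurable_pi_apply j))
    measurable_const measurable_const

lemma measurableSet_injective {N : ℕ} :
    MeasurableSet {v : Fin N → ℝ | Function.Injective v} := by
  have h : {v : Fin N → ℝ | Function.Injective v}
      = ⋂ (i) (j) (_ : i ≠ j), {v : Fin N → ℝ | v i ≠ v j} := by
    ext v
    simp only [Set.mem_setOf_eq, Set.mem_iInter]
    constructor
    · intro h i j hij hv; exact hij (h hv)
    · intro h a b hab; by_contra hne; exact h a b hne hab
  rw [h]
  refine MeasurableSet.iInter fun i => MeasurableSet.iInter fun j => MeasurableSet.iInter fun _ => ?_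
  exact (measurableSet_eq_fun (measurable_pi_apply i) (measurable_pi_apply j)).compl

lemma pi_perm_measure_eq {N : ℕ} (ρ : Measure ℝ) [IsProbabilityMeasure ρ]
    (σ : Equiv.Perm (Fin N)) (T : Set (Fin N → ℝ)) (hT : MeasurableSet T) :
    Measure.pi (fun _ : Fin N => ρ) ((fun v => v ∘ σ) ⁻¹' T)
      = Measure.pi (fun _ : Fin N => ρ) T := by
  have hmp := measurePreserving_piCongrLeft (fun _ : Fin N => ρ) σ.symm
  have he : ⇑(MeasurableEquiv.piCongrLeft (fun _ : Fin N => ℝ) σ.symm) = fun v => v ∘ σ := by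
    funext v
    funext i
    have h1 := MeasurableEquiv.piCongrLeft_apply_apply σ.symm (β := fun _ => ℝ) v (σ i)
    simpa using h1
  rw [← he]
  exact hmp.measure_preimage hT.nullMeasurableSet

end Aux

/-- Split-conformal coverage conditional on the trained
predictor: with fixed measurable `l < m < u` on `ℝ^d`, i.i.d. pairs
`(X₁,Y₁),…,(Xₙ,Yₙ),(X,Y)` with law `μ`, conformity scores
`c(x,y) = max((m(x)-y)/(m(x)-l(x)), (y-m(x))/(u(x)-m(x)))` whose law is
atomless, `k = ⌈(1-α)(n+1)⌉ ≤ n`, and `ĉ = c₍ₖ₎`, the expanded interval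
`[m(X) - ĉ(m(X)-l(X)), m(X) + ĉ(u(X)-m(X))]` covers `Y` with probability
at most `1 - α + 1/(n+1)`: the intervals are not unnecessarily conservative. -/
theorem split_conformal_coverage_upper_bound
    {Ω : Type*} [MeasurableSpace Ω] (P : Measure Ω) [IsProbabilityMeasure P]
    (d n : ℕ) (hd : 1 ≤ d)
    (μ : Measure ((Fin d → ℝ) × ℝ)) [IsProbabilityMeasure μ]
    (l m u : (Fin d → ℝ) → ℝ)
    (hl : Measurable l) (hm : Measurable m) (hu : Measurable u)
    (hord : ∀ x, l x < m x ∧ m x < u x)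
    (W : Fin (n + 1) → Ω → (Fin d → ℝ) × ℝ)
    (hWmeas : ∀ i, Measurable (W i))
    (hWindep : iIndepFun W P)
    (hWlaw : ∀ i, P.map (W i) = μ)
    (score : (Fin d → ℝ) × ℝ → ℝ)
    (hscore : score = fun p =>
      max ((m p.1 - p.2) / (m p.1 - l p.1)) ((p.2 - m p.1) / (u p.1 - m p.1)))
    (hatomless : ∀ y : ℝ, μ {p | score p = y} = 0)
    (α : ℝ) (hα : α ∈ Set.Ioo (0 : ℝ) 1)
    (k : ℕ) (hk : k = ⌈(1 - α) * ((n : ℝ) + 1)⌉₊) (hk1 : 1 ≤ k) (hkn : k ≤ n)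
    (chat : Ω → ℝ)
    (hchat : chat = fun ω =>
      kthSmallest (fun i : Fin n => score (W i.castSucc ω)) ⟨k - 1, by omega⟩) :
    (P {ω |
      m (W (Fin.last n) ω).1 -
          chat ω * (m (W (Fin.last n) ω).1 - l (W (Fin.last n) ω).1) ≤
        (W (Fin.last n) ω).2 ∧
      (W (Fin.last n) ω).2 ≤
        m (W (Fin.last n) ω).1 +
          chat ω * (u (W (Fin.last n) ω).1 - m (W (Fin.last n) ω).1)}).toReal ≤
      1 - α + 1 / ((n : ℝ) + 1) := by
  classical
  obtain ⟨hα0, hα1⟩ := hα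
  -- measurability of the score
  have hscoremeas : Measurable score := by
    rw [hscore]
    exact Measurable.max
      (((hm.comp measurable_fst).sub measurable_snd).div
        ((hm.comp measurable_fst).sub (hl.comp measurable_fst)))
      ((measurable_snd.sub (hm.comp measurable_fst)).div
        ((hu.comp measurable_fst).sub (hm.comp measurable_fst)))
  set ρ : Measure ℝ := μ.map score with hρ
  have hρprob : IsProbabilityMeasure ρ := Measure.isProbabilityMeasure_map hscoremeas.aemeasurable
  -- the individual scores
  set c : Fin (n + 1) → Ω → ℝ := fun i ω => score (W i ω) with hcdef
  have hcmeas : ∀ i, Measurable (c i) := fun i => hscoremeas.comp (hWmeas i)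
  have hcindep : iIndepFun c P :=
    hWindep.comp (fun _ => score) (fun _ => hscoremeas)
  have hclaw : ∀ i, P.map (c i) = ρ := by
    intro i
    rw [show c i = score ∘ W i from rfl, ← Measure.map_map hscoremeas (hWmeas i), hWlaw i]
  -- the joint score vector and its law
  set S : Ω → (Fin (n + 1) → ℝ) := fun ω i => c i ω with hSdef
  have hSmeas : Measurable S := measurable_pi_lambda _ fun i => hcmeas i
  set ν : Measure (Fin (n + 1) → ℝ) := Measure.pi (fun _ => ρ) with hν
  have hmap : P.map S = ν := by
    rw [hν]
    refine (Measure.pi_eq fun s hs => ?_).symm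
    have hpre : S ⁻¹' Set.pi Set.univ s = ⋂ i ∈ (Finset.univ : Finset (Fin (n + 1))),
        c i ⁻¹' s i := by
      ext ω
      simp [Set.mem_pi, hSdef]
    rw [Measure.map_apply hSmeas (MeasurableSet.univ_pi hs), hpre,
      hcindep.measure_inter_preimage_eq_mul Finset.univ (fun i _ => hs i)]
    refine Finset.prod_congr rfl fun i _ => ?_
    rw [← hclaw i, Measure.map_apply (hcmeas i) (hs i)]
  -- atomlessness of ρ
  have hρatom : ∀ y : ℝ, ρ {y} = 0 := by
    intro y
    rw [hρ, Measure.map_apply hscoremeas (measurableSet_singleton y)]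
    exact hatomless y
  -- collisions are null
  have hcollide : ∀ i j : Fin (n + 1), i ≠ j → P {ω | c i ω = c j ω} = 0 := by
    intro i j hij
    have hindep2 : IndepFun (c i) (c j) P := hcindep.indepFun hij
    have hmap2 : P.map (fun ω => (c i ω, c j ω)) = ρ.prod ρ := by
      rw [(indepFun_iff_map_prod_eq_prod_map_map (hcmeas i).aemeasurable
        (hcmeas j).aemeasurable).mp hindep2, hclaw i, hclaw j]
    have hdiag : MeasurableSet {p : ℝ × ℝ | p.1 = p.2} :=
      measurableSet_eq_fun measurable_fst measurable_snd
    have hset : {ω | c i ω = c j ω}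
        = (fun ω => (c i ω, c j ω)) ⁻¹' {p : ℝ × ℝ | p.1 = p.2} := rfl
    rw [hset, ← Measure.map_apply ((hcmeas i).prodMk (hcmeas j)) hdiag, hmap2,
      Measure.prod_apply hdiag]
    have hz : ∀ x : ℝ, ρ (Prod.mk x ⁻¹' {p : ℝ × ℝ | p.1 = p.2}) = 0 := by
      intro x
      have : (Prod.mk x ⁻¹' {p : ℝ × ℝ | p.1 = p.2}) = {x} := by
        ext y; simp [eq_comm]
      rw [this]; exact hρatom x
    rw [lintegral_congr hz, lintegral_zero]
  -- rank-count function and rank events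
  set cnt : Fin (n + 1) → (Fin (n + 1) → ℝ) → ℕ :=
    fun j v => (Finset.univ.filter fun i => v i < v j).card with hcnt
  set G : Fin (n + 1) → ℕ → Set (Fin (n + 1) → ℝ) :=
    fun j r => {v | Function.Injective v ∧ cnt j v = r} with hG
  have hGmeas : ∀ j r, MeasurableSet (G j r) := by
    intro j r
    exact MeasurableSet.inter measurableSet_injective
      ((measurable_cnt j) (measurableSet_singleton r))
  -- strict monotonicity of count in the value
  have cnt_lt : ∀ (v : Fin (n + 1) → ℝ) (j j' : Fin (n + 1)), v j < v j' →
      cnt j v < cnt j' v := by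
    intro v j j' h
    apply Finset.card_lt_card
    rw [Finset.ssubset_iff_of_subset]
    · exact ⟨j, by simp [h], by simp⟩
    · intro i hi
      simp only [Finset.mem_filter, Finset.mem_univ, true_and] at hi ⊢
      linarith
  have hGdisj : ∀ r : ℕ, Pairwise fun j j' => Disjoint (G j r) (G j' r) := by
    intro r j j' hjj'
    rw [Set.disjoint_left]
    rintro v ⟨hinj, h1⟩ ⟨-, h2⟩
    apply hjj'
    rcases lt_trichotomy (v j) (v j') with h | h | h
    · exact absurd (h1.trans h2.symm) (cnt_lt v j j' h).ne
    · exact hinj h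
    · exact absurd (h1.trans h2.symm) (cnt_lt v j' j h).ne'
  -- symmetry: all rank events have the same probability
  have hGsymm : ∀ (r : ℕ) (j : Fin (n + 1)), ν (G j r) = ν (G (Fin.last n) r) := by
    intro r j
    set σ : Equiv.Perm (Fin (n + 1)) := Equiv.swap j (Fin.last n) with hσ
    have hpre : (fun v : Fin (n + 1) → ℝ => v ∘ σ) ⁻¹' G (Fin.last n) r = G j r := by
      ext v
      simp only [Set.mem_preimage, hG, Set.mem_setOf_eq]
      have hinj : Function.Injective (v ∘ σ) ↔ Function.Injective v := by
        constructor
        · intro h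
          have h2 : Function.Injective ((v ∘ σ) ∘ σ.symm) := h.comp σ.symm.injective
          have h3 : (v ∘ ⇑σ) ∘ ⇑σ.symm = v := by funext i; simp
          rwa [h3] at h2
        · intro h; exact h.comp σ.injective
      have hcnteq : cnt (Fin.last n) (v ∘ σ) = cnt j v := by
        rw [hcnt]
        simp only [Function.comp_apply]
        have hlast : σ (Fin.last n) = j := Equiv.swap_apply_right j (Fin.last n)
        simp only [hlast]
        exact card_filter_perm σ (fun i => v i < v j)
      rw [hinj, hcnteq]
    rw [← hpre, pi_perm_measure_eq ρ σ _ (hGmeas (Fin.last n) r)]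
  -- probability measure on the product
  have hνprob : IsProbabilityMeasure ν := by rw [hν]; infer_instance
  have hGbound : ∀ r : ℕ, ν (G (Fin.last n) r) ≤ 1 / ((n : ℝ≥0∞) + 1) := by
    intro r
    have h1 : ν (⋃ j, G j r) = ∑' j, ν (G j r) :=
      measure_iUnion (hGdisj r) (fun j => hGmeas j r)
    have h2 : ∑' j : Fin (n + 1), ν (G j r) = ∑ j : Fin (n + 1), ν (G j r) := tsum_fintype _
    have h3 : ∑ j : Fin (n + 1), ν (G j r) = ((n : ℝ≥0∞) + 1) * ν (G (Fin.last n) r) := by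
      rw [Finset.sum_congr rfl fun j _ => hGsymm r j, Finset.sum_const, Finset.card_univ,
        Fintype.card_fin, nsmul_eq_mul]
      push_cast
      ring
    have h4 : ((n : ℝ≥0∞) + 1) * ν (G (Fin.last n) r) ≤ 1 := by
      rw [← h3, ← h2, ← h1]; exact prob_le_one
    rw [ENNReal.le_div_iff_mul_le (Or.inl (by simp)) (Or.inl (by simp))]
    rwa [mul_comm]
  -- the union of the low-rank events
  set B : Set (Fin (n + 1) → ℝ) := ⋃ r ∈ Finset.range k, G (Fin.last n) r with hB
  have hBmeas : MeasurableSet B :=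
    (Finset.range k).measurableSet_biUnion fun r _ => hGmeas (Fin.last n) r
  have hνB : ν B ≤ (k : ℝ≥0∞) / ((n : ℝ≥0∞) + 1) := by
    calc ν B ≤ ∑ r ∈ Finset.range k, ν (G (Fin.last n) r) :=
          measure_biUnion_finset_le (Finset.range k) _
      _ ≤ ∑ _r ∈ Finset.range k, 1 / ((n : ℝ≥0∞) + 1) :=
          Finset.sum_le_sum fun r _ => hGbound r
      _ = (k : ℝ≥0∞) * (1 / ((n : ℝ≥0∞) + 1)) := by
          rw [Finset.sum_const, Finset.card_range, nsmul_eq_mul]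
      _ = (k : ℝ≥0∞) / ((n : ℝ≥0∞) + 1) := by rw [mul_one_div]
  -- the event is a.s. contained in S ⁻¹' B
  have hEsub : {ω |
      m (W (Fin.last n) ω).1 -
          chat ω * (m (W (Fin.last n) ω).1 - l (W (Fin.last n) ω).1) ≤
        (W (Fin.last n) ω).2 ∧
      (W (Fin.last n) ω).2 ≤
        m (W (Fin.last n) ω).1 +
          chat ω * (u (W (Fin.last n) ω).1 - m (W (Fin.last n) ω).1)}
      ⊆ S ⁻¹' B ∪ ⋃ (i : Fin (n + 1)) (j : Fin (n + 1)) (_ : i ≠ j),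
          {ω | c i ω = c j ω} := by
    intro ω hω
    by_cases hinj : Function.Injective (S ω)
    · left
      obtain ⟨h1, h2⟩ := hω
      have hml : l (W (Fin.last n) ω).1 < m (W (Fin.last n) ω).1 := (hord _).1
      have hmu : m (W (Fin.last n) ω).1 < u (W (Fin.last n) ω).1 := (hord _).2
      have hscoley : score (W (Fin.last n) ω) ≤ chat ω := by
        rw [hscore]
        apply max_le
        · rw [div_le_iff₀ (by linarith)]; linarith
        · rw [div_le_iff₀ (by linarith)]; linarith
      -- rewrite chat as kthSmallest of the first n entries of S ω
      have hwinj : Function.Injective (fun i : Fin n => S ω i.castSucc) := by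
        intro a b hab
        have := hinj hab
        exact Fin.castSucc_injective n this
      have hkth : chat ω = kthSmallest (fun i : Fin n => S ω i.castSucc)
          ⟨k - 1, by omega⟩ := by
        rw [hchat]
      have hle : S ω (Fin.last n) ≤ kthSmallest (fun i : Fin n => S ω i.castSucc)
          ⟨k - 1, by omega⟩ := by
        rw [← hkth]
        exact hscoley
      have hcount : (Finset.univ.filter fun i : Fin n =>
          S ω i.castSucc < S ω (Fin.last n)).card ≤ k - 1 :=
        (kth_le_iff _ hwinj _ _).mp hle
      have hdecomp : cnt (Fin.last n) (S ω) = (Finset.univ.filter fun i : Fin n =>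
          S ω i.castSucc < S ω (Fin.last n)).card := by
        rw [hcnt]
        simp only [Finset.card_filter]
        rw [Fin.sum_univ_castSucc]
        simp
      show S ω ∈ B
      rw [hB]
      simp only [Set.mem_iUnion, Finset.mem_range]
      exact ⟨cnt (Fin.last n) (S ω), by omega, hinj, rfl⟩
    · right
      rw [Function.Injective] at hinj
      push_neg at hinj
      obtain ⟨a, b, hab, hne⟩ := hinj
      simp only [Set.mem_iUnion]
      exact ⟨a, b, hne, hab⟩
  -- put everything together
  have hPB : P (S ⁻¹' B) = ν B := by
    rw [← hmap, Measure.map_apply hSmeas hBmeas]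
  have hPcol : P (⋃ (i : Fin (n + 1)) (j : Fin (n + 1)) (_ : i ≠ j),
      {ω | c i ω = c j ω}) = 0 := by
    refine measure_iUnion_null fun i => measure_iUnion_null fun j =>
      measure_iUnion_null fun hij => hcollide i j hij
  have hPE : P {ω |
      m (W (Fin.last n) ω).1 -
          chat ω * (m (W (Fin.last n) ω).1 - l (W (Fin.last n) ω).1) ≤
        (W (Fin.last n) ω).2 ∧
      (W (Fin.last n) ω).2 ≤
        m (W (Fin.last n) ω).1 +
          chat ω * (u (W (Fin.last n) ω).1 - m (W (Fin.last n) ω).1)}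
      ≤ (k : ℝ≥0∞) / ((n : ℝ≥0∞) + 1) := by
    calc P _ ≤ P (S ⁻¹' B ∪ ⋃ (i : Fin (n + 1)) (j : Fin (n + 1)) (_ : i ≠ j),
          {ω | c i ω = c j ω}) := measure_mono hEsub
      _ ≤ P (S ⁻¹' B) + P (⋃ (i : Fin (n + 1)) (j : Fin (n + 1)) (_ : i ≠ j),
          {ω | c i ω = c j ω}) := measure_union_le _ _
      _ = ν B := by rw [hPB, hPcol, add_zero]
      _ ≤ _ := hνB
  have hne_top : (k : ℝ≥0∞) / ((n : ℝ≥0∞) + 1) ≠ ⊤ :=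
    (ENNReal.div_lt_top (by simp) (by simp)).ne
  have h1 := ENNReal.toReal_mono hne_top hPE
  have h2 : ((k : ℝ≥0∞) / ((n : ℝ≥0∞) + 1)).toReal = (k : ℝ) / ((n : ℝ) + 1) := by
    rw [ENNReal.toReal_div]
    congr 1
  rw [h2] at h1
  refine h1.trans ?_
  have hn1 : (0 : ℝ) < (n : ℝ) + 1 := by positivity
  have hkb : (k : ℝ) ≤ (1 - α) * ((n : ℝ) + 1) + 1 := by
    rw [hk]
    exact le_of_lt (Nat.ceil_lt_add_one (by nlinarith))
  rw [div_le_iff₀ hn1]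
  have : (1 - α + 1 / ((n : ℝ) + 1)) * ((n : ℝ) + 1)
      = (1 - α) * ((n : ℝ) + 1) + 1 := by
    field_simp
  rw [this]
  exact hkb
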